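/- Given any fixed customer sequence $\pi$, the appointment times defined by $A_1 := 0$ and $A_i := \left( \max_{1 \le l \le i-1}\left( A_l + \sum_{k=l}^{i-1} \sum_j \pi_{kj}\bar{p}_j \right) - \sum_j \pi_{ij} W_j \right)^+$ for $i \ge 2$ satisfy all robust waiting-time guarantees: for every service-time scenario $p \in \prod_j [\ubar{p}_j, \bar{p}_j]$ and every no-show scenario $\lambda$, the waiting time of appointment $i$, namely $(C_{i-1}(\pi,A,p,\lambda) - A_i)^+$ when the assigned customer shows up, does not exceed $\sum_j \pi_{ij} W_j$. Hence the Robust Appointment Scheduling Problem with Waiting Time Guarantees is always feasible. -/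

import Mathlib

/-- Completion times from appointment times `A` and service durations `sv`. -/
noncomputable def ctimes6 (A sv : ℕ → ℝ) : ℕ → ℝ
  | 0 => 0
  | i + 1 => max (A (i + 1)) (ctimes6 A sv i) + sv (i + 1)

lemma ctimes6_le_sup (A sv hiv : ℕ → ℝ) (hA1 : A 1 = 0)
    (hsv : ∀ k, sv k ≤ hiv k) :
    ∀ m, ∀ h1 : 1 ≤ m,
      ctimes6 A sv m ≤ (Finset.Icc 1 m).sup' (Finset.nonempty_Icc.mpr h1)
        (fun l => A l + ∑ k ∈ Finset.Icc l m, hiv k) := by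
  intro m
  induction m with
  | zero => intro h; omega
  | succ m ih =>
    intro _
    rcases Nat.eq_zero_or_pos m with hm | hm
    · subst hm
      simp only [ctimes6, hA1]
      have : max (0:ℝ) 0 + sv 1 ≤ A 1 + hiv 1 := by
        simp [hA1, hsv 1]
      refine le_trans this ?_
      have hmem : (1:ℕ) ∈ Finset.Icc 1 1 := by simp
      have := Finset.le_sup' (f := fun l => A l + ∑ k ∈ Finset.Icc l 1, hiv k) hmem
      simpa using this
    · have hS := ih hm
      have hstep : ctimes6 A sv (m + 1)
          ≤ max (A (m + 1)) ((Finset.Icc 1 m).sup' (Finset.nonempty_Icc.mpr hm)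
              (fun l => A l + ∑ k ∈ Finset.Icc l m, hiv k)) + hiv (m + 1) := by
        simp only [ctimes6]
        gcongr <;> first
          | exact hsv _
          | exact hS
      refine hstep.trans ?_
      rcases max_cases (A (m + 1)) ((Finset.Icc 1 m).sup' (Finset.nonempty_Icc.mpr hm)
          (fun l => A l + ∑ k ∈ Finset.Icc l m, hiv k)) with ⟨heq, _⟩ | ⟨heq, _⟩ <;>
        rw [heq]
      · have hmem : m + 1 ∈ Finset.Icc 1 (m + 1) := by simp
        have := Finset.le_sup' (f := fun l => A l + ∑ k ∈ Finset.Icc l (m + 1), hiv k) hmem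
        simpa only [Finset.Icc_self, Finset.sum_singleton] using this
      · rw [Finset.sup'_add]
        apply Finset.sup'_le
        intro l hl
        simp only [Finset.mem_Icc] at hl
        have hmem : l ∈ Finset.Icc 1 (m + 1) := by simp; omega
        have := Finset.le_sup' (f := fun l => A l + ∑ k ∈ Finset.Icc l (m + 1), hiv k) hmem
        have hsum : ∑ k ∈ Finset.Icc l (m + 1), hiv k
            = ∑ k ∈ Finset.Icc l m, hiv k + hiv (m + 1) :=
          Finset.sum_Icc_succ_top (by omega) _
        calc A l + ∑ k ∈ Finset.Icc l m, hiv k + hiv (m + 1)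
            = A l + ∑ k ∈ Finset.Icc l (m + 1), hiv k := by rw [hsum]; ring
          _ ≤ _ := this

/-- feasibility: the appointment times `A 1 = 0`,
`A i = (max_{l<i}(A l + ∑_{k=l}^{i-1} p̄_{asg k}) - W_{asg i})⁺` satisfy every robust
waiting-time guarantee: for every service-time scenario in the box and every
no-show scenario, the waiting time of appointment `i` is at most `W (asg i)`. -/
theorem asap_times_satisfy_waiting_time_guarantees
    (n : ℕ) (asg : ℕ → ℕ) (lo hi W : ℕ → ℝ)
    (hlo : ∀ j, 0 ≤ lo j) (hlohi : ∀ j, lo j ≤ hi j) (hW : ∀ j, 0 ≤ W j)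
    (A : ℕ → ℝ) (hA1 : A 1 = 0)
    (hAdef : ∀ i, ∀ h2 : 2 ≤ i, i ≤ n →
      A i = max (((Finset.Icc 1 (i - 1)).sup' (Finset.nonempty_Icc.mpr (by omega))
        (fun l => A l + ∑ k ∈ Finset.Icc l (i - 1), hi (asg k))) - W (asg i)) 0) :
    ∀ p : ℕ → ℝ, (∀ j, p j ∈ Set.Icc (lo j) (hi j)) →
    ∀ lam : ℕ → ℝ, (∀ j, lam j = 0 ∨ lam j = 1) →
    ∀ i, 1 ≤ i → i ≤ n →
      max (ctimes6 A (fun k => lam (asg k) * p (asg k)) (i - 1) - A i) 0 ≤ W (asg i) := by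
  intro p hp lam hlam i hi1 hin
  have hsv : ∀ k, lam (asg k) * p (asg k) ≤ hi (asg k) := by
    intro k
    rcases hlam (asg k) with h | h <;> rw [h]
    · simpa using le_trans (hlo _) (hlohi _)
    · simpa using (hp (asg k)).2
  rcases Nat.lt_or_ge i 2 with h2 | h2
  · have : i = 1 := by omega
    subst this
    simp [ctimes6, hA1, hW]
  · have hC := ctimes6_le_sup A (fun k => lam (asg k) * p (asg k)) (fun k => hi (asg k))
      hA1 hsv (i - 1) (by omega)
    have hAi := hAdef i h2 hin
    apply max_le _ (hW _)
    have hAge : (Finset.Icc 1 (i - 1)).sup' (Finset.nonempty_Icc.mpr (by omega))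
        (fun l => A l + ∑ k ∈ Finset.Icc l (i - 1), hi (asg k)) - W (asg i) ≤ A i := by
      rw [hAi]; exact le_max_left _ _
    linarith
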